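/- Under the stated assumptions, the nonsymmetric additive Schwarz operator S = ∑_{k=0}^N S_k satisfies ‖Su‖_a ≤ γ_2 ‖u‖_a for all u ∈ V^h, with γ_2 = (2M/α)(1 + ρ(ℰ)). -/

import Mathlib

open scoped RealInnerProductSpace

theorem stmt7 {V : Type*} [NormedAddCommGroup V] [InnerProductSpace ℝ V]
    [FiniteDimensional ℝ V]
    (N : ℕ) (Vs : Fin (N + 1) → Submodule ℝ V)
    (a_h : V →ₗ[ℝ] V →ₗ[ℝ] ℝ) (M α : ℝ) (hM : 0 < M) (hα : 0 < α)
    (hbound : ∀ u v : V, |a_h u v| ≤ M * ‖u‖ * ‖v‖)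
    (hcoerc : ∀ u : V, α * ‖u‖ ^ 2 ≤ a_h u u)
    (S : Fin (N + 1) → V →ₗ[ℝ] V)
    (hSmem : ∀ k u, S k u ∈ Vs k)
    (hSdef : ∀ k u, ∀ v ∈ Vs k, a_h (S k u) v = a_h u v)
    (ε : Matrix (Fin N) (Fin N) ℝ) (hεsymm : ε.IsSymm) (hεnonneg : ∀ k l, 0 ≤ ε k l)
    (hCS : ∀ k l : Fin N, ∀ v ∈ Vs k.succ, ∀ w ∈ Vs l.succ,
      ⟪v, w⟫ ≤ ε k l * ‖v‖ * ‖w‖) :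
    ∀ u : V, ‖∑ k, S k u‖ ≤
      2 * M / α * (1 + ‖Matrix.toEuclideanCLM (𝕜 := ℝ) ε‖) * ‖u‖ := by
  intro u
  set A := Matrix.toEuclideanCLM (𝕜 := ℝ) ε with hA
  have hnA : (0:ℝ) ≤ ‖A‖ := norm_nonneg _
  have hu : (0:ℝ) ≤ ‖u‖ := norm_nonneg _
  -- per-operator bound
  have hSk : ∀ k, ‖S k u‖ ≤ M / α * ‖u‖ := by
    intro k
    rcases eq_or_ne (‖S k u‖) 0 with h0 | h0
    · rw [h0]; positivity
    have hpos : 0 < ‖S k u‖ := lt_of_le_of_ne (norm_nonneg _) (Ne.symm h0)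
    have h1 : α * ‖S k u‖ ^ 2 ≤ a_h (S k u) (S k u) := hcoerc _
    have h2 : a_h (S k u) (S k u) = a_h u (S k u) := hSdef k u _ (hSmem k u)
    have h3 : a_h u (S k u) ≤ M * ‖u‖ * ‖S k u‖ := le_trans (le_abs_self _) (hbound _ _)
    have h4 : α * ‖S k u‖ * ‖S k u‖ ≤ M * ‖u‖ * ‖S k u‖ := by
      nlinarith
    have := (mul_le_mul_iff_of_pos_right hpos).mp h4
    rw [div_mul_eq_mul_div, le_div_iff₀ hα]; linarith
  set w' : V := ∑ k : Fin N, S k.succ u with hw'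
  -- sum of squares bound
  have h1 : α * ∑ k : Fin N, ‖S k.succ u‖ ^ 2 ≤ M * ‖u‖ * ‖w'‖ := by
    have e1 : ∀ k : Fin N, a_h (S k.succ u) (S k.succ u) = a_h u (S k.succ u) :=
      fun k => hSdef _ u _ (hSmem _ u)
    calc α * ∑ k : Fin N, ‖S k.succ u‖ ^ 2
        = ∑ k : Fin N, α * ‖S k.succ u‖ ^ 2 := by rw [Finset.mul_sum]
      _ ≤ ∑ k : Fin N, a_h u (S k.succ u) := by
          apply Finset.sum_le_sum; intro k _; rw [← e1 k]; exact hcoerc _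
      _ = a_h u w' := by rw [hw', map_sum]
      _ ≤ M * ‖u‖ * ‖w'‖ := le_trans (le_abs_self _) (hbound _ _)
  -- Euclidean vector of norms
  set x : EuclideanSpace ℝ (Fin N) := (WithLp.equiv 2 _).symm (fun k => ‖S k.succ u‖) with hx
  have hxk : ∀ k, x k = ‖S k.succ u‖ := fun k => rfl
  have hxn : ‖x‖ ^ 2 = ∑ k : Fin N, ‖S k.succ u‖ ^ 2 := by
    rw [← real_inner_self_eq_norm_sq]
    rw [PiLp.inner_apply]
    simp [hxk, RCLike.inner_apply, sq]
  have h2 : ‖w'‖ ^ 2 ≤ ‖A‖ * ∑ k : Fin N, ‖S k.succ u‖ ^ 2 := by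
    have hAx : ∀ k, (A x) k = ∑ l, ε k l * x l := by
      intro k
      have := Matrix.ofLp_toEuclideanCLM (𝕜 := ℝ) ε x
      have hk := congrFun this k
      exact hk.trans (by simp [Matrix.mulVec, dotProduct])
    have key : ⟪w', w'⟫ ≤ ⟪x, A x⟫ := by
      rw [hw', inner_sum]
      rw [PiLp.inner_apply]
      apply Finset.sum_le_sum
      intro k _
      rw [sum_inner, hAx, RCLike.inner_apply]
      simp only [starRingEnd_apply, star_trivial]
      rw [Finset.sum_mul]
      apply Finset.sum_le_sum
      intro l _
      have := hCS l k (S l.succ u) (hSmem _ u) (S k.succ u) (hSmem _ u)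
      have hsymm : ε k l = ε l k := by
        have := congrFun (congrFun hεsymm.eq l) k
        simpa [Matrix.transpose_apply] using this
      rw [hxk, hxk]
      calc ⟪S l.succ u, S k.succ u⟫ ≤ ε l k * ‖S l.succ u‖ * ‖S k.succ u‖ := this
        _ = (ε k l * ‖S l.succ u‖) * ‖S k.succ u‖ := by rw [hsymm]
    have hw2 : ⟪w', w'⟫ = ‖w'‖ ^ 2 := real_inner_self_eq_norm_sq w'
    have hAxb : ⟪x, A x⟫ ≤ ‖A‖ * ‖x‖ ^ 2 := by
      calc ⟪x, A x⟫ ≤ ‖x‖ * ‖A x‖ := real_inner_le_norm _ _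
        _ ≤ ‖x‖ * (‖A‖ * ‖x‖) := by
            apply mul_le_mul_of_nonneg_left (A.le_opNorm x) (norm_nonneg _)
        _ = ‖A‖ * ‖x‖ ^ 2 := by ring
    rw [← hw2, ← hxn]
    exact le_trans key hAxb
  have h3 : ‖w'‖ ≤ ‖A‖ * (M / α) * ‖u‖ := by
    rcases eq_or_ne (‖w'‖) 0 with h0 | h0
    · rw [h0]; positivity
    have hpos : 0 < ‖w'‖ := lt_of_le_of_ne (norm_nonneg _) (Ne.symm h0)
    have hs : ∑ k : Fin N, ‖S k.succ u‖ ^ 2 ≤ M / α * ‖u‖ * ‖w'‖ := by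
      rw [div_mul_eq_mul_div, div_mul_eq_mul_div, le_div_iff₀ hα]
      nlinarith
    have : ‖w'‖ ^ 2 ≤ ‖A‖ * (M / α * ‖u‖ * ‖w'‖) :=
      le_trans h2 (mul_le_mul_of_nonneg_left hs hnA)
    nlinarith
  have hsplit : ∑ k, S k u = S 0 u + w' := by
    rw [hw', Fin.sum_univ_succ]
  calc ‖∑ k, S k u‖ = ‖S 0 u + w'‖ := by rw [hsplit]
    _ ≤ ‖S 0 u‖ + ‖w'‖ := norm_add_le _ _
    _ ≤ M / α * ‖u‖ + ‖A‖ * (M / α) * ‖u‖ := add_le_add (hSk 0) h3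
    _ ≤ 2 * M / α * (1 + ‖A‖) * ‖u‖ := by
        have hMα : 0 ≤ M / α := by positivity
        have heq : 2 * M / α * (1 + ‖A‖) * ‖u‖ =
            M / α * ‖u‖ + ‖A‖ * (M / α) * ‖u‖ + (M / α * ‖u‖ + M / α * ‖A‖ * ‖u‖) := by
          ring
        have t1 : 0 ≤ M / α * ‖u‖ := by positivity
        have t2 : 0 ≤ M / α * ‖A‖ * ‖u‖ := by positivity
        linarith
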